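/- For real numbers t₁, t₂, t₃ with t₃ < 0 and t₁² + t₂² < t₃², one has ∫₀^∞ e^{t₃ r} · (Σ_{n=0}^∞ 2π r^{2n}(t₁²+t₂²)^n / (2^{2n}(n!)²)) dr = 2π / √(t₃² − t₁² − t₂²). -/

import Mathlib

open Real MeasureTheory

noncomputable def cb (n : ℕ) : ℝ := (Nat.centralBinom n : ℝ) / 4 ^ n

lemma cb_zero : cb 0 = 1 := by simp [cb, Nat.centralBinom]

lemma cb_nonneg (n : ℕ) : 0 ≤ cb n := by
  have h4 : (0:ℝ) < 4 ^ n := by positivity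
  exact div_nonneg (Nat.cast_nonneg _) h4.le

lemma cb_rec (n : ℕ) : 2 * ((n:ℝ) + 1) * cb (n + 1) = (2 * n + 1) * cb n := by
  have h := Nat.succ_mul_centralBinom_succ n
  have h' : ((n:ℝ) + 1) * (Nat.centralBinom (n+1) : ℝ)
      = 2 * (2 * n + 1) * (Nat.centralBinom n : ℝ) := by exact_mod_cast h
  have h4 : (4:ℝ) ^ (n+1) = 4 * 4 ^ n := by ring
  simp only [cb, h4]
  have h4n : (4:ℝ) ^ n ≠ 0 := by positivity
  field_simp
  linear_combination 2 * h'

lemma cb_le_one (n : ℕ) : cb n ≤ 1 := by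
  induction n with
  | zero => simp [cb_zero]
  | succ n ih =>
    have h := cb_rec n
    have hpos : (0:ℝ) < 2 * ((n:ℝ) + 1) := by positivity
    have : cb (n+1) = (2 * n + 1) / (2 * ((n:ℝ) + 1)) * cb n := by
      field_simp
      linarith [h]
    rw [this]
    have h1 : (2 * (n:ℝ) + 1) / (2 * ((n:ℝ) + 1)) ≤ 1 := by
      rw [div_le_one hpos]; linarith
    calc (2 * (n:ℝ) + 1) / (2 * ((n:ℝ) + 1)) * cb n ≤ 1 * cb n := by
          exact mul_le_mul_of_nonneg_right h1 (cb_nonneg n)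
      _ ≤ 1 := by simpa using ih

lemma summable_cb_pow {z : ℝ} (hz : |z| < 1) : Summable (fun n : ℕ => cb n * z ^ n) := by
  apply Summable.of_norm_bounded (g := fun n => |z| ^ n)
    (summable_geometric_of_lt_one (abs_nonneg z) hz)
  intro n
  rw [Real.norm_eq_abs, abs_mul, abs_pow, abs_of_nonneg (cb_nonneg n)]
  calc cb n * |z| ^ n ≤ 1 * |z| ^ n :=
        mul_le_mul_of_nonneg_right (cb_le_one n) (by positivity)
    _ = |z| ^ n := one_mul _

lemma summable_aux {b : ℝ} (hb0 : 0 ≤ b) (hb : b < 1) :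
    Summable (fun n : ℕ => (n : ℝ) * b ^ (n - 1)) := by
  rw [← summable_nat_add_iff 1]
  have hb' : ‖b‖ < 1 := by rwa [Real.norm_eq_abs, abs_of_nonneg hb0]
  have h1 : Summable (fun n : ℕ => (n : ℝ) ^ 1 * b ^ n) :=
    summable_pow_mul_geometric_of_norm_lt_one 1 hb'
  have h2 : Summable (fun n : ℕ => b ^ n) := summable_geometric_of_lt_one hb0 hb
  have h3 := h1.add h2
  apply h3.congr
  intro n
  simp only [Nat.add_sub_cancel, pow_one]
  push_cast
  ring

lemma summable_cb_deriv {z : ℝ} {b : ℝ} (hzb : |z| ≤ b) (hb : b < 1) :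
    Summable (fun n : ℕ => cb n * ((n : ℝ) * z ^ (n - 1))) := by
  have hb0 : 0 ≤ b := le_trans (abs_nonneg z) hzb
  apply Summable.of_norm_bounded (g := fun n : ℕ => (n : ℝ) * b ^ (n - 1)) (summable_aux hb0 hb)
  intro n
  rw [Real.norm_eq_abs, abs_mul, abs_mul, Nat.abs_cast, abs_of_nonneg (cb_nonneg n), abs_pow]
  have h1 : |z| ^ (n - 1) ≤ b ^ (n - 1) := pow_le_pow_left₀ (abs_nonneg z) hzb _
  calc cb n * ((n:ℝ) * |z| ^ (n-1)) ≤ 1 * ((n:ℝ) * b ^ (n-1)) := by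
        apply mul_le_mul (cb_le_one n)
        · exact mul_le_mul_of_nonneg_left h1 (Nat.cast_nonneg n)
        · positivity
        · norm_num
    _ = (n:ℝ) * b ^ (n-1) := one_mul _

lemma hasSum_cb {y : ℝ} (hy0 : 0 ≤ y) (hy1 : y < 1) :
    HasSum (fun n : ℕ => cb n * y ^ n) (1 / Real.sqrt (1 - y)) := by
  set f : ℝ → ℝ := fun z => ∑' n : ℕ, cb n * z ^ n with hf
  have hderiv : ∀ z ∈ Set.Ioo (-1:ℝ) 1,
      HasDerivAt f (∑' n : ℕ, cb n * ((n:ℝ) * z ^ (n - 1))) z := by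
    intro z hz
    have hz' : |z| < 1 := abs_lt.2 ⟨hz.1, hz.2⟩
    set b := (|z| + 1) / 2 with hbdef
    have habs : 0 ≤ |z| := abs_nonneg z
    have hzb : |z| < b := by rw [hbdef]; linarith
    have hb0 : 0 < b := by rw [hbdef]; linarith
    have hb1 : b < 1 := by rw [hbdef]; linarith
    rw [hf]
    refine hasDerivAt_tsum_of_isPreconnected (u := fun n : ℕ => (n:ℝ) * b ^ (n - 1))
      (𝕜 := ℝ) (F := ℝ) (g := fun (n : ℕ) (w : ℝ) => cb n * w ^ n)
      (g' := fun (n : ℕ) (w : ℝ) => cb n * ((n:ℝ) * w ^ (n - 1)))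
      (summable_aux hb0.le hb1) (isOpen_Ioo (a := -b) (b := b))
      ((convex_Ioo _ _).isPreconnected) (y₀ := 0) ?_ ?_ ?_ ?_ ?_
    · intro n w _
      exact (hasDerivAt_pow n w).const_mul (cb n)
    · intro n w hw
      have hwb : |w| ≤ b := le_of_lt (abs_lt.2 ⟨hw.1, hw.2⟩)
      rw [Real.norm_eq_abs, abs_mul, abs_mul, Nat.abs_cast,
        abs_of_nonneg (cb_nonneg n), abs_pow]
      have h1 : |w| ^ (n - 1) ≤ b ^ (n - 1) := pow_le_pow_left₀ (abs_nonneg w) hwb _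
      calc cb n * ((n:ℝ) * |w| ^ (n-1)) ≤ 1 * ((n:ℝ) * b ^ (n-1)) := by
            apply mul_le_mul (cb_le_one n)
            · exact mul_le_mul_of_nonneg_left h1 (Nat.cast_nonneg n)
            · positivity
            · norm_num
        _ = (n:ℝ) * b ^ (n-1) := one_mul _
    · exact ⟨by linarith, hb0⟩
    · apply summable_of_ne_finset_zero (s := {0})
      intro n hn
      have hn' : n ≠ 0 := by simpa using hn
      simp [zero_pow hn']
    · exact ⟨abs_lt.1 hzb |>.1, abs_lt.1 hzb |>.2⟩
  have hODE : ∀ z ∈ Set.Ioo (-1:ℝ) 1,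
      f z = 2 * (1 - z) * ∑' n : ℕ, cb n * ((n:ℝ) * z ^ (n - 1)) := by
    intro z hz
    have hz' : |z| < 1 := abs_lt.2 ⟨hz.1, hz.2⟩
    set S := ∑' n : ℕ, cb n * ((n:ℝ) * z ^ (n - 1)) with hSdef
    have hg : HasSum (fun n : ℕ => cb n * ((n:ℝ) * z ^ (n - 1))) S :=
      (summable_cb_deriv le_rfl hz').hasSum
    have h1 : HasSum (fun n : ℕ => cb (n+1) * (((n:ℝ)+1) * z ^ n)) S := by
      have hg' : HasSum (fun n : ℕ => cb n * ((n:ℝ) * z ^ (n - 1)))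
          (S + ∑ i ∈ Finset.range 1, cb i * ((i:ℝ) * z ^ (i - 1))) := by simpa using hg
      have h := (hasSum_nat_add_iff 1).2 hg'
      apply h.congr
      intro n
      push_cast
      simp [Nat.add_sub_cancel]
    have he2 : ∀ n : ℕ, 2 * (cb (n+1) * (((n:ℝ)+1) * z ^ n)) = (2*(n:ℝ)+1) * (cb n * z ^ n) := by
      intro n
      linear_combination z ^ n * cb_rec n
    have h2 : HasSum (fun n : ℕ => (2*(n:ℝ)+1) * (cb n * z ^ n)) (2*S) := by
      have h2' := h1.mul_left 2
      simp only [he2] at h2'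
      exact h2'
    have h3' := hg.mul_left (2*z)
    have he3 : ∀ n : ℕ, 2*z * (cb n * ((n:ℝ) * z ^ (n-1))) = 2*(n:ℝ) * (cb n * z ^ n) := by
      intro n
      cases n with
      | zero => simp
      | succ m =>
        simp only [Nat.add_sub_cancel, pow_succ]
        push_cast
        ring
    simp only [he3] at h3'
    have h4 := h2.sub h3'
    have he4 : ∀ n : ℕ, (2*(n:ℝ)+1) * (cb n * z^n) - 2*(n:ℝ) * (cb n * z^n) = cb n * z^n :=
      fun n => by ring
    simp only [he4] at h4
    have : f z = 2*S - 2*z*S := h4.tsum_eq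
    rw [this]; ring
  have hphi : ∀ z ∈ Set.Ioo (-1:ℝ) 1,
      HasDerivAt (fun w => Real.sqrt (1 - w) * f w) 0 z := by
    intro z hz
    have h1z : (0:ℝ) < 1 - z := by linarith [hz.2]
    have hinner : HasDerivAt (fun w : ℝ => 1 - w) (-1) z := by
      simpa using (hasDerivAt_id z).const_sub 1
    have hsq : HasDerivAt (fun w : ℝ => Real.sqrt (1 - w)) ((-1) / (2 * Real.sqrt (1 - z))) z :=
      hinner.sqrt h1z.ne'
    have hmul := hsq.mul (hderiv z hz)
    have hfz := hODE z hz
    set S := ∑' n : ℕ, cb n * ((n:ℝ) * z ^ (n - 1)) with hSdef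
    have hs : 0 < Real.sqrt (1 - z) := Real.sqrt_pos.2 h1z
    have hss : Real.sqrt (1 - z) * Real.sqrt (1 - z) = 1 - z := Real.mul_self_sqrt h1z.le
    set s := Real.sqrt (1 - z) with hsdef
    refine hmul.congr_deriv ?_
    rw [hfz, ← hss]
    have hs0 : s ≠ 0 := ne_of_gt hs
    field_simp
    ring
  have key : Real.sqrt (1 - y) * f y = 1 := by
    have hmem : ∀ x ∈ Set.Icc (0:ℝ) y, x ∈ Set.Ioo (-1:ℝ) 1 := by
      intro x hx
      exact ⟨by linarith [hx.1], by linarith [hx.2, hy1]⟩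
    have hcont : ContinuousOn (fun w => Real.sqrt (1 - w) * f w) (Set.Icc 0 y) := by
      intro x hx
      exact ((hphi x (hmem x hx)).continuousAt).continuousWithinAt
    have hd : ∀ x ∈ Set.Ico (0:ℝ) y,
        HasDerivWithinAt (fun w => Real.sqrt (1 - w) * f w) 0 (Set.Ici x) x := by
      intro x hx
      exact (hphi x (hmem x ⟨hx.1, le_of_lt hx.2⟩)).hasDerivWithinAt
    have hconst := constant_of_has_deriv_right_zero hcont hd y (Set.right_mem_Icc.2 hy0)
    have hf0 : f 0 = 1 := by
      have : (∑' n : ℕ, cb n * (0:ℝ) ^ n) = cb 0 * (0:ℝ) ^ 0 := by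
        apply tsum_eq_single
        intro n hn
        simp [zero_pow hn]
      simp only [hf]
      rw [this, cb_zero]
      norm_num
    simpa [hf0] using hconst
  have hs : 0 < Real.sqrt (1 - y) := Real.sqrt_pos.2 (by linarith)
  have hfy : f y = 1 / Real.sqrt (1 - y) := by
    field_simp
    linarith [key]
  have hsum := (summable_cb_pow (z := y) (by rwa [abs_of_nonneg hy0])).hasSum
  rwa [show (∑' n : ℕ, cb n * y^n) = 1 / Real.sqrt (1-y) from hfy] at hsum

theorem integral_exp_bessel_series (t₁ t₂ t₃ : ℝ) (h₃ : t₃ < 0)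
    (h : t₁ ^ 2 + t₂ ^ 2 < t₃ ^ 2) :
    ∫ r in Set.Ioi (0:ℝ),
        Real.exp (t₃ * r) *
          (∑' n : ℕ, 2 * Real.pi * r ^ (2 * n) * (t₁ ^ 2 + t₂ ^ 2) ^ n /
            (2 ^ (2 * n) * (n.factorial : ℝ) ^ 2)) =
      2 * Real.pi / Real.sqrt (t₃ ^ 2 - t₁ ^ 2 - t₂ ^ 2) := by
  set a2 : ℝ := t₁ ^ 2 + t₂ ^ 2 with ha2
  have ha2nn : 0 ≤ a2 := by positivity
  set c : ℝ := -t₃ with hc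
  have hc0 : 0 < c := by rw [hc]; linarith
  have hc2 : c ^ 2 = t₃ ^ 2 := by rw [hc]; ring
  set y : ℝ := a2 / c ^ 2 with hy
  have hy0 : 0 ≤ y := by positivity
  have hy1 : y < 1 := by
    rw [hy, div_lt_one (by positivity), hc2]
    exact h
  set F : ℕ → ℝ → ℝ := fun n r =>
    Real.exp (t₃ * r) * (2 * Real.pi * r ^ (2*n) * a2 ^ n /
      (2 ^ (2*n) * (n.factorial : ℝ) ^ 2)) with hF
  have hKpos : ∀ n : ℕ, (0:ℝ) < 2 ^ (2*n) * (n.factorial : ℝ) ^ 2 := by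
    intro n
    have : (0:ℝ) < (n.factorial : ℝ) := by exact_mod_cast n.factorial_pos
    positivity
  -- integrability
  have hInt : ∀ n : ℕ, IntegrableOn (F n) (Set.Ioi 0) := by
    intro n
    have h0 : IntegrableOn (fun x : ℝ => x ^ ((2*n : ℕ):ℝ) * Real.exp (-c * x ^ (1:ℝ)))
        (Set.Ioi 0) := by
      apply integrableOn_rpow_mul_exp_neg_mul_rpow _ (by norm_num) hc0
      have : (0:ℝ) ≤ ((2*n : ℕ):ℝ) := Nat.cast_nonneg _
      linarith
    have h1 : IntegrableOn (fun x : ℝ => x ^ (2*n) * Real.exp (t₃ * x)) (Set.Ioi 0) := by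
      apply h0.congr_fun _ measurableSet_Ioi
      intro x hx
      simp only [Real.rpow_one, Real.rpow_natCast]
      rw [show -c * x = t₃ * x by rw [hc]; ring]
    have h2 : IntegrableOn (fun x : ℝ => (2 * Real.pi * a2 ^ n / (2 ^ (2*n) * (n.factorial:ℝ)^2))
        * (x ^ (2*n) * Real.exp (t₃ * x))) (Set.Ioi 0) :=
      h1.const_mul _
    apply h2.congr_fun _ measurableSet_Ioi
    intro x _
    simp only [hF]
    ring
  -- central binomial identity
  have hCB : ∀ n : ℕ, (Nat.centralBinom n : ℝ) * ((n.factorial : ℝ) * (n.factorial : ℝ))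
      = ((2*n).factorial : ℝ) := by
    intro n
    have hle : n ≤ 2*n := by omega
    have h := Nat.choose_mul_factorial_mul_factorial hle
    have h2 : 2*n - n = n := by omega
    rw [h2, mul_assoc] at h
    have h3 : Nat.centralBinom n * (n.factorial * n.factorial) = (2*n).factorial := by
      rw [Nat.centralBinom_eq_two_mul_choose]
      exact h
    exact_mod_cast h3
  -- value of each integral
  have hval : ∀ n : ℕ, (∫ r in Set.Ioi (0:ℝ), F n r)
      = (2 * Real.pi / c) * (cb n * y ^ n) := by
    intro n
    have h0 := integral_rpow_mul_exp_neg_mul_Ioi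
      (a := ((2*n : ℕ):ℝ) + 1) (r := c) (by positivity) hc0
    rw [add_sub_cancel_right, Real.Gamma_nat_eq_factorial] at h0
    have e1 : ((1:ℝ)/c) ^ (((2*n:ℕ):ℝ) + 1) = ((1:ℝ)/c) ^ (2*n+1) := by
      rw [show (((2*n:ℕ):ℝ) + 1) = ((2*n+1 : ℕ):ℝ) by push_cast; ring, Real.rpow_natCast]
    rw [e1] at h0
    simp_rw [Real.rpow_natCast] at h0
    have h1 : (∫ r in Set.Ioi (0:ℝ), F n r)
        = (2 * Real.pi * a2 ^ n / (2 ^ (2*n) * (n.factorial:ℝ)^2))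
          * ∫ t in Set.Ioi (0:ℝ), t ^ (2*n) * Real.exp (-(c * t)) := by
      rw [← integral_const_mul]
      apply setIntegral_congr_fun measurableSet_Ioi
      intro x _
      simp only [hF]
      rw [show -(c * x) = t₃ * x by rw [hc]; ring]
      ring
    have hfac : (0:ℝ) < (n.factorial : ℝ) := by exact_mod_cast n.factorial_pos
    have h4 : ((2:ℝ) ^ (2*n)) = 4 ^ n := by
      rw [pow_mul]; norm_num
    rw [h1, h0, cb, hy, ← hCB n, h4]
    have h4n : (0:ℝ) < (4:ℝ) ^ n := by positivity
    field_simp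
    ring_nf
    simp only [pow_mul', neg_one_sq, one_pow, one_mul]
    ring_nf
    simp [hc0.ne']
  -- norms
  have hnorm : ∀ n : ℕ, (∫ r in Set.Ioi (0:ℝ), ‖F n r‖) = ∫ r in Set.Ioi (0:ℝ), F n r := by
    intro n
    apply setIntegral_congr_fun measurableSet_Ioi
    intro r hr
    apply Real.norm_of_nonneg
    have h1 : (0:ℝ) ≤ r ^ (2*n) := pow_nonneg (le_of_lt hr) _
    have h2 : (0:ℝ) ≤ 2 * Real.pi * r ^ (2*n) * a2 ^ n :=
      mul_nonneg (mul_nonneg (by positivity) h1) (pow_nonneg ha2nn n)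
    exact mul_nonneg (Real.exp_pos _).le (div_nonneg h2 (hKpos n).le)
  have hsummable : Summable (fun n : ℕ => ∫ r in Set.Ioi (0:ℝ), ‖F n r‖) := by
    have hs := ((hasSum_cb hy0 hy1).mul_left (2 * Real.pi / c)).summable
    apply hs.congr
    intro n
    rw [hnorm n, hval n]
  have hswap := integral_tsum_of_summable_integral_norm
    (μ := volume.restrict (Set.Ioi (0:ℝ))) hInt hsummable
  have hrw : ∀ r : ℝ, Real.exp (t₃ * r) *
      (∑' n : ℕ, 2 * Real.pi * r ^ (2*n) * a2 ^ n / (2 ^ (2*n) * (n.factorial : ℝ) ^ 2))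
      = ∑' n : ℕ, F n r := by
    intro r
    rw [← tsum_mul_left]
  simp_rw [hrw]
  rw [← hswap]
  rw [show (∑' n : ℕ, ∫ r in Set.Ioi (0:ℝ), F n r)
      = ∑' n : ℕ, (2 * Real.pi / c) * (cb n * y ^ n) from tsum_congr hval]
  rw [((hasSum_cb hy0 hy1).mul_left (2 * Real.pi / c)).tsum_eq]
  have hsub : t₃ ^ 2 - t₁ ^ 2 - t₂ ^ 2 = c ^ 2 * (1 - y) := by
    rw [hy]
    field_simp
    rw [hc, ha2]
    ring
  rw [hsub, Real.sqrt_mul (sq_nonneg c), Real.sqrt_sq hc0.le, div_mul_div_comm, mul_one]
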